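/- For every channel capacity k, every index i, and every n ≥ 1, the conflated happens-before relation hb_k (the transitive closure of R_k) relates the i-th receive to the (i + n·k)-th receive and the i-th send to the (i + n·k)-th send: hb_k (rv i) (rv (i + n*k)) and hb_k (sd i) (sd (i + n*k)). (Thus, under the conflated rules, each channel operation has a lingering happens-before effect on all later operations of the same kind whose index differs by a multiple of k.) -/

import Mathlib

/-- Events of a single channel: the i-th send and the i-th receive. -/
inductive Ev : Type
  | sd : ℕ → Ev
  | rv : ℕ → Ev

open Ev

/-- The "conflated" generating relation for a channel of capacity `k`,
obtained by dropping the distinction between a channel operation and its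
completion: a send happens-before the corresponding receive, and the i-th
receive happens-before the (i+k)-th send. -/
inductive R (k : ℕ) : Ev → Ev → Prop
  | send_rv (i : ℕ) : R k (sd i) (rv i)
  | rv_send (i : ℕ) : R k (rv i) (sd (i + k))

/-- The conflated happens-before relation: transitive closure of `R k`. -/
def hb (k : ℕ) : Ev → Ev → Prop := Relation.TransGen (R k)

lemma rv_step (k i : ℕ) : hb k (rv i) (rv (i + k)) :=
  Relation.TransGen.head (R.rv_send i) (Relation.TransGen.single (R.send_rv (i + k)))

lemma sd_step (k i : ℕ) : hb k (sd i) (sd (i + k)) :=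
  Relation.TransGen.head (R.send_rv i) (Relation.TransGen.single (R.rv_send i))

/-- Under the conflated rules, each channel operation has a lingering
happens-before effect on all later operations of the same kind whose index
differs by a multiple of `k`. -/
theorem conflated_lingering_effect (k i n : ℕ) (hn : 1 ≤ n) :
    hb k (rv i) (rv (i + n * k)) ∧ hb k (sd i) (sd (i + n * k)) := by
  induction n with
  | zero => omega
  | succ m ih =>
    rcases Nat.eq_zero_or_pos m with hm | hm
    · subst hm
      rw [Nat.one_mul]
      exact ⟨rv_step k i, sd_step k i⟩
    · obtain ⟨h1, h2⟩ := ih hm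
      constructor
      · have := h1.trans (rv_step k (i + m * k))
        simpa [hb, Nat.succ_mul, Nat.add_assoc] using this
      · have := h2.trans (sd_step k (i + m * k))
        simpa [hb, Nat.succ_mul, Nat.add_assoc] using this
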